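/- Let r ≥ 1 be an integer and let (α;β) = (α₁,…,α_{r+1};β₁,…,β_r) ∈ 𝒰_r be such that no β_i + 1 is a non-positive integer. Let A, B ∈ ℂ with Re(B − A) > 0 and B not a non-positive integer. Then Σ_{k=0}^∞ (α₁)_k⋯(α_{r+1})_k (A)_k/((β₁+1)_k⋯(β_r+1)_k (B)_k · k!) = ((B−A)/B) · Σ_{k=0}^∞ (α₁+1)_k⋯(α_{r+1}+1)_k (A)_k/((β₁+1)_k⋯(β_r+1)_k (B+1)_k · k!). -/

import Mathlib

noncomputable def poch (a : ℂ) (k : ℕ) : ℂ := Polynomial.eval a (ascPochhammer ℂ k)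

noncomputable def esym {n : ℕ} (v : Fin n → ℂ) (l : ℕ) : ℂ :=
  ∑ t ∈ Finset.powersetCard l (Finset.univ : Finset (Fin n)), ∏ i ∈ t, v i

def inU (r : ℕ) (α : Fin (r+1) → ℂ) (β : Fin r → ℂ) : Prop :=
  ∀ l : ℕ, 1 ≤ l → l ≤ r → esym α l = esym β l

open Finset Filter Complex Topology

lemma poch_zero (a : ℂ) : poch a 0 = 1 := by simp [poch]

lemma poch_succ (a : ℂ) (k : ℕ) : poch a (k+1) = poch a k * (a + k) := by
  simp [poch, ascPochhammer_succ_eval]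

lemma poch_succ_left (a : ℂ) (k : ℕ) : poch a (k+1) = a * poch (a+1) k := by
  simp only [poch, ascPochhammer_succ_left, Polynomial.eval_mul, Polynomial.eval_X,
    Polynomial.eval_comp, Polynomial.eval_add, Polynomial.eval_one]

lemma poch_eq_prod (a : ℂ) (k : ℕ) : poch a k = ∏ j ∈ range k, (a + j) := by
  induction k with
  | zero => simp [poch_zero]
  | succ n ih => rw [poch_succ, ih, prod_range_succ]

lemma poch_one_eq (k : ℕ) : poch 1 k = (k.factorial : ℂ) := by
  simp [poch]

lemma poch_ne_zero {a : ℂ} (h : ∀ m : ℕ, a ≠ -(m:ℂ)) (k : ℕ) : poch a k ≠ 0 := by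
  rw [poch_eq_prod]
  exact prod_ne_zero_iff.2 fun j _ => by
    intro hz; exact h j (by linear_combination hz)

lemma esym_zero {n : ℕ} (v : Fin n → ℂ) : esym v 0 = 1 := by
  simp [esym]

lemma esym_one {n : ℕ} (v : Fin n → ℂ) : esym v 1 = ∑ i, v i := by
  simp [esym, powersetCard_one]

lemma esym_top {n : ℕ} (v : Fin n → ℂ) : esym v n = ∏ i, v i := by
  have h := Finset.powersetCard_self (Finset.univ : Finset (Fin n))
  rw [Finset.card_univ, Fintype.card_fin] at h
  simp [esym, h]

lemma prodAdd {n : ℕ} (v : Fin n → ℂ) (x : ℂ) :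
    ∏ i, (v i + x) = ∑ l ∈ range (n+1), esym v l * x^(n-l) := by
  rw [Finset.prod_add, Finset.sum_powerset]
  rw [show ((Finset.univ : Finset (Fin n)).card) = n by simp]
  refine Finset.sum_congr rfl fun l hl => ?_
  rw [esym, Finset.sum_mul]
  refine Finset.sum_congr rfl fun t ht => ?_
  have htc : t.card = l := (Finset.mem_powersetCard.1 ht).2
  rw [Finset.prod_const, Finset.card_sdiff_of_subset (Finset.subset_univ t)]
  simp [htc]

lemma key_identity (r : ℕ) (α : Fin (r+1) → ℂ) (β : Fin r → ℂ) (hU : inU r α β) (x : ℂ) :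
    ∏ i, (α i + x) = x * ∏ i, (β i + x) + ∏ i, α i := by
  rw [prodAdd α x, prodAdd β x, Finset.sum_range_succ (n := r+1), Finset.mul_sum]
  congr 1
  · refine Finset.sum_congr rfl fun l hl => ?_
    have hlr : l ≤ r := Nat.lt_succ_iff.1 (Finset.mem_range.1 hl)
    have hexp : r + 1 - l = (r - l) + 1 := by omega
    rcases Nat.eq_zero_or_pos l with h0 | h1
    · subst h0; rw [esym_zero, esym_zero, hexp, pow_succ]; ring
    · rw [hU l h1 hlr, hexp, pow_succ]; ring
  · rw [esym_top]; simp

lemma sum_eq_of_inU (r : ℕ) (hr : 1 ≤ r) (α : Fin (r+1) → ℂ) (β : Fin r → ℂ) (hU : inU r α β) :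
    ∑ i, α i = ∑ i, β i := by
  have := hU 1 le_rfl hr
  rwa [esym_one, esym_one] at this

lemma gammaSeqInv_eq (s : ℂ) (n : ℕ) :
    (Complex.GammaSeq s n)⁻¹ = poch s (n+1) / ((n:ℂ)^s * n.factorial) := by
  rw [Complex.GammaSeq, inv_div, poch_eq_prod]

lemma tendsto_gammaSeqInv (s : ℂ) :
    Tendsto (fun n => (Complex.GammaSeq s n)⁻¹) atTop (𝓝 (Complex.Gamma s)⁻¹) := by
  by_cases hs : ∀ m : ℕ, s ≠ -(m:ℂ)
  · exact (Complex.GammaSeq_tendsto_Gamma s).inv₀ (Complex.Gamma_ne_zero hs)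
  · push_neg at hs
    obtain ⟨m, hm⟩ := hs
    have hG : Complex.Gamma s = 0 := by rw [hm]; exact Complex.Gamma_neg_nat_eq_zero m
    rw [hG, inv_zero]
    apply Tendsto.congr' _ tendsto_const_nhds
    filter_upwards [eventually_ge_atTop m] with n hn
    have : poch s (n+1) = 0 := by
      rw [poch_eq_prod]
      refine Finset.prod_eq_zero (Finset.mem_range.2 (by omega : m < n+1)) ?_
      rw [hm]; ring
    rw [gammaSeqInv_eq, this, zero_div]

noncomputable def PP (L : List ℂ) (k : ℕ) : ℂ := (L.map (fun s => poch s k)).prod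
noncomputable def QQ (L : List ℂ) (n : ℕ) : ℂ := (L.map (fun s => (Complex.GammaSeq s n)⁻¹)).prod

lemma QQ_tendsto (L : List ℂ) :
    Tendsto (QQ L) atTop (𝓝 ((L.map (fun s => (Complex.Gamma s)⁻¹)).prod)) := by
  induction L with
  | nil => exact tendsto_const_nhds.congr (fun n => by simp [QQ])
  | cons a L ih =>
      simp only [QQ, List.map_cons, List.prod_cons] at *
      exact (tendsto_gammaSeqInv a).mul ih

lemma QQ_ne_zero {L : List ℂ} (hT : ∀ t ∈ L, ∀ m : ℕ, t ≠ -(m:ℂ)) (n : ℕ) (hn : 1 ≤ n) :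
    QQ L n ≠ 0 := by
  have hn0 : (n:ℂ) ≠ 0 := Nat.cast_ne_zero.2 (by omega)
  refine List.prod_ne_zero ?_
  intro h0
  obtain ⟨t, ht, hz⟩ := List.mem_map.1 h0
  rw [gammaSeqInv_eq] at hz
  exact div_ne_zero (poch_ne_zero (hT t ht) _)
    (mul_ne_zero (by simp [Complex.cpow_eq_zero_iff, hn0]) (by exact_mod_cast Nat.factorial_ne_zero n)) hz

lemma PP_eq (L : List ℂ) (n : ℕ) (hn : 1 ≤ n) :
    PP L (n+1) = QQ L n * (n:ℂ)^(L.sum) * ((n.factorial : ℂ))^(L.length) := by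
  have hn0 : (n:ℂ) ≠ 0 := Nat.cast_ne_zero.2 (by omega)
  have hf : (n.factorial : ℂ) ≠ 0 := by exact_mod_cast Nat.factorial_ne_zero n
  induction L with
  | nil => simp [PP, QQ]
  | cons a L ih =>
      simp only [PP, QQ, List.map_cons, List.prod_cons, List.sum_cons, List.length_cons] at *
      rw [ih, gammaSeqInv_eq, Complex.cpow_add _ _ hn0, pow_succ]
      have ha : ((n:ℂ)^a) ≠ 0 := by simp [Complex.cpow_eq_zero_iff, hn0]
      field_simp

lemma master (L₁ L₂ : List ℂ) (hlen : L₁.length = L₂.length)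
    (hT : ∀ t ∈ L₂, ∀ m : ℕ, t ≠ -(m:ℂ)) :
    ∃ C : ℝ, ∀ᶠ n in atTop, ‖PP L₁ (n+1) / PP L₂ (n+1)‖ ≤ C * (n:ℝ)^((L₁.sum - L₂.sum).re) := by
  have hM : ((L₂.map (fun s => (Complex.Gamma s)⁻¹)).prod) ≠ 0 := by
    refine List.prod_ne_zero ?_
    intro h0
    obtain ⟨t, ht, hz⟩ := List.mem_map.1 h0
    exact Complex.Gamma_ne_zero (hT t ht) (by simpa [inv_eq_zero] using hz)
  have hρ : Tendsto (fun n => QQ L₁ n / QQ L₂ n) atTop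
      (𝓝 ((L₁.map (fun s => (Complex.Gamma s)⁻¹)).prod / (L₂.map (fun s => (Complex.Gamma s)⁻¹)).prod)) :=
    (QQ_tendsto L₁).div (QQ_tendsto L₂) hM
  set ℓ := (L₁.map (fun s => (Complex.Gamma s)⁻¹)).prod / (L₂.map (fun s => (Complex.Gamma s)⁻¹)).prod
  refine ⟨‖ℓ‖ + 1, ?_⟩
  have hev : ∀ᶠ n in atTop, ‖QQ L₁ n / QQ L₂ n‖ ≤ ‖ℓ‖ + 1 :=
    hρ.norm.eventually_le_const (lt_add_one _)
  filter_upwards [hev, eventually_ge_atTop 1] with n hb hn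
  have hn0 : (n:ℂ) ≠ 0 := Nat.cast_ne_zero.2 (by omega)
  have hnpos : (0:ℝ) < n := by exact_mod_cast hn
  have heq : PP L₁ (n+1) / PP L₂ (n+1) = (QQ L₁ n / QQ L₂ n) * (n:ℂ)^(L₁.sum - L₂.sum) := by
    rw [PP_eq _ n hn, PP_eq _ n hn, hlen, Complex.cpow_sub _ _ hn0]
    have h2 : QQ L₂ n ≠ 0 := QQ_ne_zero hT n hn
    have h3 : ((n:ℂ)^(L₂.sum)) ≠ 0 := by simp [Complex.cpow_eq_zero_iff, hn0]
    have hf : ((n.factorial : ℂ))^(L₂.length) ≠ 0 :=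
      pow_ne_zero _ (by exact_mod_cast Nat.factorial_ne_zero n)
    field_simp
  rw [heq, norm_mul]
  have hre : ‖(n:ℂ)^(L₁.sum - L₂.sum)‖ = (n:ℝ)^((L₁.sum - L₂.sum).re) := by
    rw [show ((n:ℕ):ℂ) = ((n:ℝ):ℂ) by push_cast; ring,
      Complex.norm_cpow_eq_rpow_re_of_pos hnpos]
  rw [hre]
  exact mul_le_mul_of_nonneg_right hb (Real.rpow_nonneg (le_of_lt hnpos) _)


set_option maxHeartbeats 1000000 in
/-- The beta-integral consequence of the generalized Euler transformation
(Theorem thm:genThomae). -/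
theorem generalized_thomae
    (r : ℕ) (hr : 1 ≤ r) (α : Fin (r+1) → ℂ) (β : Fin r → ℂ)
    (hU : inU r α β)
    (hβ : ∀ i : Fin r, ∀ m : ℕ, β i + 1 ≠ -(m : ℂ))
    (A B : ℂ) (hAB : 0 < (B - A).re) (hB : ∀ m : ℕ, B ≠ -(m : ℂ)) :
    ∑' k : ℕ, ((∏ i, poch (α i) k) * poch A k) /
        ((∏ i, poch (β i + 1) k) * poch B k * (k.factorial : ℂ))
      = ((B - A) / B) *
        ∑' k : ℕ, ((∏ i, poch (α i + 1) k) * poch A k) /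
          ((∏ i, poch (β i + 1) k) * poch (B + 1) k * (k.factorial : ℂ)) := by
  classical
  set c : ℕ → ℂ := fun k => ((∏ i, poch (α i) k) * poch A k) /
      ((∏ i, poch (β i + 1) k) * poch B k * (k.factorial : ℂ)) with hc_def
  set d : ℕ → ℂ := fun k => ((∏ i, poch (α i + 1) k) * poch A k) /
      ((∏ i, poch (β i + 1) k) * poch (B + 1) k * (k.factorial : ℂ)) with hd_def
  set m : ℕ → ℂ := fun k => ((∏ i, poch (α i + 1) k) * poch A k) /
      ((∏ i, poch (β i + 1) k) * poch B k * (k.factorial : ℂ)) with hm_def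
  have hone : ∀ mm : ℕ, (1:ℂ) ≠ -(mm : ℂ) := by
    intro mm h
    have h2 := congrArg Complex.re h
    simp at h2
    have : (0:ℝ) ≤ (mm:ℝ) := Nat.cast_nonneg mm
    linarith
  have hB1 : ∀ mm : ℕ, B + 1 ≠ -(mm : ℂ) := by
    intro mm h
    apply hB (mm+1)
    push_cast
    linear_combination h
  have hB0 : B ≠ 0 := by have := hB 0; simpa using this
  have hBk : ∀ k : ℕ, B + (k:ℂ) ≠ 0 := by
    intro k h; exact hB k (by linear_combination h)
  have hPb : ∀ k, (∏ i, poch (β i + 1) k) ≠ 0 := fun k =>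
    Finset.prod_ne_zero_iff.2 fun i _ => poch_ne_zero (hβ i) k
  have hpB : ∀ k, poch B k ≠ 0 := poch_ne_zero hB
  have hpB1 : ∀ k, poch (B+1) k ≠ 0 := poch_ne_zero hB1
  have hfac : ∀ k : ℕ, (k.factorial : ℂ) ≠ 0 := fun k => by
    exact_mod_cast k.factorial_ne_zero
  have hXb : ∀ k : ℕ, (∏ i, (β i + 1 + (k:ℂ))) ≠ 0 := fun k =>
    Finset.prod_ne_zero_iff.2 fun i _ => by
      intro h; exact hβ i k (by linear_combination h)
  have hk1 : ∀ k : ℕ, ((k:ℂ)+1) ≠ 0 := fun k => Nat.cast_add_one_ne_zero k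
  -- key algebraic identity at x = k+1
  have hkey : ∀ k : ℕ, ∏ i, (α i + 1 + (k:ℂ))
      = ((k:ℂ)+1) * (∏ i, (β i + 1 + (k:ℂ))) + ∏ i, α i := by
    intro k
    have h := key_identity r α β hU ((k:ℂ)+1)
    calc ∏ i, (α i + 1 + (k:ℂ)) = ∏ i, (α i + ((k:ℂ)+1)) :=
          Finset.prod_congr rfl fun i _ => by ring
      _ = ((k:ℂ)+1) * ∏ i, (β i + ((k:ℂ)+1)) + ∏ i, α i := h
      _ = ((k:ℂ)+1) * (∏ i, (β i + 1 + (k:ℂ))) + ∏ i, α i := by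
          rw [Finset.prod_congr rfl (fun (i : Fin r) _ => by ring :
            ∀ i ∈ Finset.univ, β i + ((k:ℂ)+1) = β i + 1 + (k:ℂ))]
  -- relation between d and m
  have hd : ∀ k : ℕ, d k = m k * B / (B + k) := by
    intro k
    have hrel : poch B k * (B + k) = B * poch (B+1) k := by
      rw [← poch_succ, poch_succ_left]
    rw [hd_def, hm_def]
    simp only
    rw [div_mul_eq_mul_div, div_div, div_eq_div_iff
      (by exact mul_ne_zero (mul_ne_zero (hPb k) (hpB1 k)) (hfac k))
      (by exact mul_ne_zero (mul_ne_zero (mul_ne_zero (hPb k) (hpB k)) (hfac k)) (hBk k))]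
    linear_combination ((∏ i, poch (α i + 1) k) * poch A k * (∏ i, poch (β i + 1) k)
      * (k.factorial : ℂ)) * hrel
  -- expansions at k+1
  have hexp : ∀ k : ℕ,
      (∏ i, poch (α i) (k+1)) = (∏ i, α i) * (∏ i, poch (α i + 1) k) := by
    intro k
    rw [← Finset.prod_mul_distrib]
    exact Finset.prod_congr rfl fun i _ => poch_succ_left (α i) k
  have hexpa : ∀ k : ℕ,
      (∏ i, poch (α i + 1) (k+1)) = (∏ i, poch (α i + 1) k) * (∏ i, (α i + 1 + (k:ℂ))) := by
    intro k
    rw [← Finset.prod_mul_distrib]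
    exact Finset.prod_congr rfl fun i _ => poch_succ (α i + 1) k
  have hexpb : ∀ k : ℕ,
      (∏ i, poch (β i + 1) (k+1)) = (∏ i, poch (β i + 1) k) * (∏ i, (β i + 1 + (k:ℂ))) := by
    intro k
    rw [← Finset.prod_mul_distrib]
    exact Finset.prod_congr rfl fun i _ => poch_succ (β i + 1) k
  -- per-term telescoping identity
  have hf1 : ∀ k : ℕ, c (k+1) = m (k+1) - m k * ((A + k)/(B + k)) := by
    intro k
    have hkey' := hkey k
    have hPb' := hPb k; have hXb' := hXb k; have hpB' := hpB k
    have hBk' := hBk k; have hfac' := hfac k; have hk1' := hk1 k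
    rw [hc_def, hm_def]
    simp only
    rw [hexp k, hexpa k, hexpb k, poch_succ A k, poch_succ B k, Nat.factorial_succ]
    push_cast
    set P0 := ∏ i, α i with hsP0
    set Pa := ∏ i, poch (α i + 1) k with hsPa
    set Pb := ∏ i, poch (β i + 1) k with hsPb
    set Xa := ∏ i, (α i + 1 + (k:ℂ)) with hsXa
    set Xb := ∏ i, (β i + 1 + (k:ℂ)) with hsXb
    set pA := poch A k with hspA
    set pB := poch B k with hspB
    set F := ((k.factorial : ℕ) : ℂ) with hsF
    rw [div_mul_div_comm, div_sub_div _ _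
        (mul_ne_zero (mul_ne_zero (mul_ne_zero hPb' hXb') (mul_ne_zero hpB' hBk')) (mul_ne_zero hk1' hfac'))
        (mul_ne_zero (mul_ne_zero (mul_ne_zero hPb' hpB') hfac') hBk'),
      div_eq_div_iff
        (mul_ne_zero (mul_ne_zero (mul_ne_zero hPb' hXb') (mul_ne_zero hpB' hBk')) (mul_ne_zero hk1' hfac'))
        (mul_ne_zero (mul_ne_zero (mul_ne_zero (mul_ne_zero hPb' hXb') (mul_ne_zero hpB' hBk')) (mul_ne_zero hk1' hfac'))
          (mul_ne_zero (mul_ne_zero (mul_ne_zero hPb' hpB') hfac') hBk'))]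
    linear_combination (-(Pa * pA * (A + (k:ℂ))) * (Pb * Xb * (pB * (B + (k:ℂ))) * (((k:ℂ) + 1) * F))
      * ((Pb * pB * F) * (B + (k:ℂ)))) * hkey'
  -- partial sums
  have hc0 : c 0 = 1 := by rw [hc_def]; simp [poch_zero]
  have hm0 : m 0 = 1 := by rw [hm_def]; simp [poch_zero]
  have hps : ∀ N : ℕ, ∑ k ∈ Finset.range (N+1), c k
      = ((B - A)/B) * ∑ k ∈ Finset.range N, d k + m N := by
    intro N
    induction N with
    | zero => simp [hc0, hm0]
    | succ N ih =>
        rw [Finset.sum_range_succ, ih, Finset.sum_range_succ, hf1 N, hd N]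
        have hBN := hBk N
        field_simp
        ring
  -- asymptotic bounds
  have hsum : ∑ i, α i = ∑ i, β i := sum_eq_of_inU r hr α β hU
  have hre : (B - A).re > 0 := hAB
  -- list setups
  have hclist : ∀ k : ℕ, c k = PP (List.ofFn α ++ [A]) k
      / PP (List.ofFn (fun i => β i + 1) ++ [B, 1]) k := by
    intro k
    rw [hc_def]
    simp only [PP, List.map_append, List.prod_append, List.map_ofFn, List.map_cons,
      List.map_nil, List.prod_cons, List.prod_nil]
    rw [List.prod_ofFn, List.prod_ofFn, poch_one_eq]
    simp only [Function.comp_def, mul_one]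
    ring
  have hdlist : ∀ k : ℕ, d k = PP (List.ofFn (fun i => α i + 1) ++ [A]) k
      / PP (List.ofFn (fun i => β i + 1) ++ [B + 1, 1]) k := by
    intro k
    rw [hd_def]
    simp only [PP, List.map_append, List.prod_append, List.map_ofFn, List.map_cons,
      List.map_nil, List.prod_cons, List.prod_nil]
    rw [List.prod_ofFn, List.prod_ofFn, poch_one_eq]
    simp only [Function.comp_def, mul_one]
    ring
  have hmlist : ∀ k : ℕ, m k = PP (List.ofFn (fun i => α i + 1) ++ [A]) k
      / PP (List.ofFn (fun i => β i + 1) ++ [B, 1]) k := by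
    intro k
    rw [hm_def]
    simp only [PP, List.map_append, List.prod_append, List.map_ofFn, List.map_cons,
      List.map_nil, List.prod_cons, List.prod_nil]
    rw [List.prod_ofFn, List.prod_ofFn, poch_one_eq]
    simp only [Function.comp_def, mul_one]
    ring
  have hTc : ∀ t ∈ List.ofFn (fun i => β i + 1) ++ [B, 1], ∀ mm : ℕ, t ≠ -(mm:ℂ) := by
    intro t ht
    simp only [List.mem_append, List.mem_ofFn, List.mem_cons, List.not_mem_nil,
      or_false, Set.mem_range] at ht
    rcases ht with ⟨i, rfl⟩ | rfl | rfl
    · exact hβ i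
    · exact hB
    · exact hone
  have hTd : ∀ t ∈ List.ofFn (fun i => β i + 1) ++ [B + 1, 1], ∀ mm : ℕ, t ≠ -(mm:ℂ) := by
    intro t ht
    simp only [List.mem_append, List.mem_ofFn, List.mem_cons, List.not_mem_nil,
      or_false, Set.mem_range] at ht
    rcases ht with ⟨i, rfl⟩ | rfl | rfl
    · exact hβ i
    · exact hB1
    · exact hone
  -- sums of lists
  have hconst : (∑ _i : Fin (r+1), (1:ℂ)) = ((r:ℂ)+1) := by
    rw [Finset.sum_const, Finset.card_univ, Fintype.card_fin, nsmul_eq_mul, mul_one]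
    push_cast; ring
  have hconst' : (∑ _i : Fin r, (1:ℂ)) = (r:ℂ) := by
    rw [Finset.sum_const, Finset.card_univ, Fintype.card_fin, nsmul_eq_mul, mul_one]
  have hsum_c1 : (List.ofFn α ++ [A]).sum = (∑ i, α i) + A := by
    rw [List.sum_append, List.sum_ofFn]
    simp only [List.sum_cons, List.sum_nil, add_zero]
  have hsum_a1 : (List.ofFn (fun i => α i + 1) ++ [A]).sum = (∑ i, α i) + ((r:ℂ)+1) + A := by
    rw [List.sum_append, List.sum_ofFn]
    simp only [List.sum_cons, List.sum_nil, add_zero, Finset.sum_add_distrib, hconst]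
  have hsum_b : (List.ofFn (fun i => β i + 1) ++ [B, 1]).sum = (∑ i, β i) + (r:ℂ) + B + 1 := by
    rw [List.sum_append, List.sum_ofFn]
    simp only [List.sum_cons, List.sum_nil, add_zero, Finset.sum_add_distrib, hconst']
    ring
  have hsum_b1 : (List.ofFn (fun i => β i + 1) ++ [B + 1, 1]).sum
      = (∑ i, β i) + (r:ℂ) + B + 2 := by
    rw [List.sum_append, List.sum_ofFn]
    simp only [List.sum_cons, List.sum_nil, add_zero, Finset.sum_add_distrib, hconst']
    ring
  have hABneg : (A - B).re < 0 := by
    have hh : B - A = -(A - B) := by ring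
    rw [hh, Complex.neg_re] at hAB
    linarith
  -- summability helper
  have hsummable : ∀ (L₁ L₂ : List ℂ), L₁.length = L₂.length →
      (∀ t ∈ L₂, ∀ mm : ℕ, t ≠ -(mm:ℂ)) → (L₁.sum - L₂.sum).re < -1 →
      Summable (fun k => PP L₁ k / PP L₂ k) := by
    intro L₁ L₂ hlen hT hlt
    rw [← summable_nat_add_iff 1]
    obtain ⟨C, hC⟩ := master L₁ L₂ hlen hT
    refine Summable.of_norm_bounded_eventually_nat
      (g := fun n => C * (n:ℝ) ^ ((L₁.sum - L₂.sum).re)) ?_ hC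
    exact (Real.summable_nat_rpow.2 hlt).mul_left C
  have hlen_c : (List.ofFn α ++ [A]).length
      = (List.ofFn (fun i => β i + 1) ++ [B, 1]).length := by simp
  have hlen_d : (List.ofFn (fun i => α i + 1) ++ [A]).length
      = (List.ofFn (fun i => β i + 1) ++ [B + 1, 1]).length := by simp
  have hr1 : (1:ℝ) ≤ (r:ℝ) := by exact_mod_cast hr
  have hsc : Summable c := by
    rw [show c = fun k => PP (List.ofFn α ++ [A]) k
        / PP (List.ofFn (fun i => β i + 1) ++ [B, 1]) k from funext hclist]
    refine hsummable _ _ hlen_c hTc ?_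
    rw [hsum_c1, hsum_b, hsum,
      show (∑ i, β i) + A - ((∑ i, β i) + (r:ℂ) + B + 1) = (A - B) - ((r:ℂ) + 1) by ring]
    have : ((A - B) - ((r:ℂ) + 1)).re = (A - B).re - ((r:ℝ) + 1) := by
      simp [Complex.sub_re, Complex.add_re]
    rw [this]
    linarith
  have hsd : Summable d := by
    rw [show d = fun k => PP (List.ofFn (fun i => α i + 1) ++ [A]) k
        / PP (List.ofFn (fun i => β i + 1) ++ [B + 1, 1]) k from funext hdlist]
    refine hsummable _ _ hlen_d hTd ?_
    rw [hsum_a1, hsum_b1, hsum,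
      show (∑ i, β i) + ((r:ℂ)+1) + A - ((∑ i, β i) + (r:ℂ) + B + 2) = (A - B) - 1 by ring]
    have : ((A - B) - 1).re = (A - B).re - 1 := by simp [Complex.sub_re]
    rw [this]
    linarith
  -- m tends to 0
  have hm_tendsto : Tendsto m atTop (𝓝 0) := by
    rw [← tendsto_add_atTop_iff_nat 1]
    obtain ⟨C, hC⟩ := master (List.ofFn (fun i => α i + 1) ++ [A])
      (List.ofFn (fun i => β i + 1) ++ [B, 1]) (by simp) hTc
    have hw : ((List.ofFn (fun i => α i + 1) ++ [A]).sum
        - (List.ofFn (fun i => β i + 1) ++ [B, 1]).sum) = A - B := by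
      rw [hsum_a1, hsum_b, hsum]; ring
    have hg : Tendsto (fun n : ℕ => C * (n:ℝ) ^ ((A - B).re)) atTop (𝓝 0) := by
      have hb : Tendsto (fun x : ℝ => x ^ ((A - B).re)) atTop (𝓝 0) := by
        have := tendsto_rpow_neg_atTop (y := -((A - B).re)) (by linarith)
        simpa using this
      have h2 : Tendsto (fun n : ℕ => ((n:ℝ)) ^ ((A - B).re)) atTop (𝓝 0) :=
        hb.comp tendsto_natCast_atTop_atTop
      simpa using h2.const_mul C
    refine squeeze_zero_norm' ?_ hg
    filter_upwards [hC] with n hn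
    rw [hmlist (n+1)]
    rw [hw] at hn
    exact hn
  -- final limit argument
  have h1 : Tendsto (fun N => ∑ k ∈ Finset.range (N+1), c k) atTop (𝓝 (∑' k, c k)) :=
    hsc.hasSum.tendsto_sum_nat.comp (tendsto_add_atTop_nat 1)
  have h2 : Tendsto (fun N => ((B - A)/B) * ∑ k ∈ Finset.range N, d k + m N) atTop
      (𝓝 (((B - A)/B) * ∑' k, d k + 0)) :=
    (tendsto_const_nhds.mul hsd.hasSum.tendsto_sum_nat).add hm_tendsto
  have h3 : Tendsto (fun N => ((B - A)/B) * ∑ k ∈ Finset.range N, d k + m N) atTop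
      (𝓝 (∑' k, c k)) := h1.congr hps
  have := tendsto_nhds_unique h3 h2
  rw [add_zero] at this
  exact this
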